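/- Let X be a topological space, x₀ x : X, γ⁰ γ¹ : Path x₀ x, and α : Path x₀ x₀ a loop at x₀. Let H : Path.Homotopy α (γ⁰.trans γ¹.symm) be a homotopy rel endpoints from α to the concatenation of γ⁰ with the reverse of γ¹. Let m := α (1/2), let p⁰ : Path x₀ m be the path t ↦ α (t/2), and let q : Path m x be the path s ↦ H (s, 1/2) (note H(1, 1/2) = (γ⁰.trans γ¹.symm)(1/2) = γ⁰(1) = x). Then the concatenation p⁰.trans q is path-homotopic to γ⁰ (Path.Homotopic (p⁰.trans q) γ⁰). -/

import Mathlib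

open unitInterval

private theorem Path.Homotopic.cast_cast {X : Type*} [TopologicalSpace X] {a b a' b' : X}
    {p q : Path a b} (h : p.Homotopic q) (ha : a' = a) (hb : b' = b) :
    (p.cast ha hb).Homotopic (q.cast ha hb) := by
  subst ha; subst hb
  have hp : p.cast rfl rfl = p := by ext t; rfl
  have hq : q.cast rfl rfl = q := by ext t; rfl
  rw [hp, hq]; exact h

/-- Given a homotopy `H` (rel endpoints) from a loop `α` at `x₀` to `γ0.trans γ1.symm`, the path
`β0` obtained by traversing the first half of `α` (i.e. `t ↦ α (t/2)`) and then following the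
track `s ↦ H (s, 1/2)` of the midpoint under the homotopy is path-homotopic to `γ0`. -/
theorem homotopic_firstHalf_trans_track
    {X : Type*} [TopologicalSpace X] {x₀ x : X}
    (γ0 γ1 : Path x₀ x) (α : Path x₀ x₀)
    (H : Path.Homotopy α (γ0.trans γ1.symm))
    (m : X) (hm : m = α.extend (1 / 2))
    (p0 : Path x₀ m) (hp : ∀ t : unitInterval, p0 t = α.extend ((t : ℝ) / 2))
    (q : Path m x)
    (hq : ∀ s : unitInterval, q s = H (s, ⟨1 / 2, by norm_num⟩)) :
    (p0.trans q).Homotopic γ0 := by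
  haveI : ContractibleSpace (I × I) := by
    have hc : Convex ℝ ((Set.Icc (0:ℝ) 1) ×ˢ (Set.Icc (0:ℝ) 1)) :=
      (convex_Icc 0 1).prod (convex_Icc 0 1)
    haveI := hc.contractibleSpace ⟨(0, 0), by simp⟩
    exact (Homeomorph.Set.prod _ _).symm.contractibleSpace
  haveI : SimplyConnectedSpace (I × I) := SimplyConnectedSpace.ofContractible _
  set half : I := ⟨1 / 2, by norm_num⟩ with hhalf
  -- the path `t ↦ t/2` in `I`
  let c : Path (0 : I) half :=
    { toFun := fun t => ⟨(t : ℝ) / 2,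
        ⟨div_nonneg t.2.1 (by norm_num), by have := t.2.2; linarith⟩⟩
      continuous_toFun := by
        apply Continuous.subtype_mk
        exact (continuous_subtype_val).div_const 2
      source' := by ext; simp
      target' := by ext; simp [hhalf] }
  -- the identity path in `I`
  let idp : Path (0 : I) 1 := ⟨⟨id, continuous_id⟩, rfl, rfl⟩
  -- bottom-then-right path in the square
  let a : Path ((0, 0) : I × I) (1, half) :=
    ((Path.refl (0 : I)).prod c).trans (idp.prod (Path.refl half))
  -- left-then-top path in the square
  let b : Path ((0, 0) : I × I) (1, half) :=
    (idp.prod (Path.refl (0 : I))).trans ((Path.refl (1 : I)).prod c)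
  have hab : a.Homotopic b := SimplyConnectedSpace.paths_homotopic a b
  have e0 : H.toContinuousMap ((0 : I), (0 : I)) = x₀ := by
    show H ((0 : I), (0 : I)) = x₀
    rw [H.apply_zero]; exact α.source
  have e1 : H.toContinuousMap ((1 : I), half) = x := by
    show H ((1 : I), half) = x
    rw [H.apply_one]
    show (γ0.trans γ1.symm) half = x
    rw [Path.trans_apply]
    simp only [hhalf]
    norm_num
  set f : C(I × I, X) := H.toContinuousMap with hf
  have hfa : ∀ y : I, f (0, y) = α y := fun y => H.apply_zero y
  have hfb : ∀ y : I, f (1, y) = (γ0.trans γ1.symm) y := fun y => H.apply_one y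
  have ht2 : ∀ t : I, (t : ℝ) / 2 ∈ I :=
    fun t => ⟨div_nonneg t.2.1 (by norm_num), by have := t.2.2; linarith⟩
  have h1 : p0.trans q = (a.map f.continuous).cast e0.symm e1.symm := by
    ext t
    show (p0.trans q) t = (f ∘ a) t
    rw [Path.trans_apply]
    show _ = f (a t)
    show _ = f ((((Path.refl (0 : I)).prod c).trans (idp.prod (Path.refl half))) t)
    rw [Path.trans_apply]
    split_ifs with h
    · rw [hp ⟨2 * (t : ℝ), _⟩]
      exact (α.extend_apply (ht2 _)).trans (hfa _).symm
    · exact hq _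
  have h2 : (b.map f.continuous).cast e0.symm e1.symm = (Path.refl x₀).trans γ0 := by
    ext t
    show (f ∘ b) t = ((Path.refl x₀).trans γ0) t
    rw [Path.trans_apply]
    show f (b t) = _
    show f (((idp.prod (Path.refl (0 : I))).trans ((Path.refl (1 : I)).prod c)) t) = _
    rw [Path.trans_apply]
    split_ifs with h
    · exact H.source _
    · have hmem : 2 * (t : ℝ) - 1 ∈ I :=
        ⟨by push_neg at h; linarith, by have := t.2.2; linarith⟩
      have key : (γ0.trans γ1.symm) (c ⟨2 * (t : ℝ) - 1, hmem⟩) = γ0 ⟨2 * (t : ℝ) - 1, hmem⟩ := by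
        rw [Path.trans_apply]
        split_ifs with h2
        · congr 1
          exact Subtype.ext (show 2 * ((2 * (t : ℝ) - 1) / 2) = 2 * (t : ℝ) - 1 by ring)
        · exfalso
          apply h2
          show (2 * (t : ℝ) - 1) / 2 ≤ 1 / 2
          have := t.2.2; linarith
      exact (hfb (c ⟨2 * (t : ℝ) - 1, hmem⟩)).trans key
  rw [h1]
  have := (hab.map f).cast_cast e0.symm e1.symm
  rw [h2] at this
  exact this.trans ⟨Path.Homotopy.reflTrans γ0⟩
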